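/- Any 3SS scheme for the domain S = {000, 001, 010, 111} ⊆ {0,1}³ satisfies |M_{001}| ≥ 6, where M_x is the set of share triples that occur with positive probability on input x. Consequently ρ(S) ≥ log 6. -/

import Mathlib

open scoped Classical

/-- A distribution scheme: a distribution `pR` on a finite randomness set `R`
and a map producing three shares from a secret and the randomness. -/
structure Scheme (X A B C R : Type) [Fintype R] where
  pR : R → ℝ
  nonneg : ∀ r, 0 ≤ pR r
  sum_one : ∑ r, pR r = 1
  share : X → R → A × B × C

/-- Party `P₁`'s view: `(W₁₂, W₃₁)`. -/
def view1 {A B C : Type} (w : A × B × C) : A × C := (w.1, w.2.2)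
/-- Party `P₂`'s view: `(W₂₃, W₁₂)`. -/
def view2 {A B C : Type} (w : A × B × C) : B × A := (w.2.1, w.1)
/-- Party `P₃`'s view: `(W₃₁, W₂₃)`. -/
def view3 {A B C : Type} (w : A × B × C) : C × B := (w.2.2, w.2.1)

/-- Probability that party `P₁`'s pair of shares equals `v`, given the secret `x`. -/
noncomputable def probV1 {X A B C R : Type} [Fintype R] (sch : Scheme X A B C R)
    (x : X) (v : A × C) : ℝ :=
  ∑ r, if view1 (sch.share x r) = v then sch.pR r else 0

/-- Probability that party `P₂`'s pair of shares equals `v`, given the secret `x`. -/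
noncomputable def probV2 {X A B C R : Type} [Fintype R] (sch : Scheme X A B C R)
    (x : X) (v : B × A) : ℝ :=
  ∑ r, if view2 (sch.share x r) = v then sch.pR r else 0

/-- Probability that party `P₃`'s pair of shares equals `v`, given the secret `x`. -/
noncomputable def probV3 {X A B C R : Type} [Fintype R] (sch : Scheme X A B C R)
    (x : X) (v : C × B) : ℝ :=
  ∑ r, if view3 (sch.share x r) = v then sch.pR r else 0

/-- A distribution scheme is a 3SS scheme for domain `S`:
perfect correctness (each party reconstructs its secret coordinate from its
pair of shares) and perfect privacy (the distribution of party `Pᵢ`'s pair of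
shares depends on the secret vector only through coordinate `i`). -/
def Is3SS {X1 X2 X3 A B C R : Type} [Fintype R] (S : Set (X1 × X2 × X3))
    (sch : Scheme (X1 × X2 × X3) A B C R) : Prop :=
  (∃ φ1 : A × C → X1, ∀ x ∈ S, ∀ r, 0 < sch.pR r → φ1 (view1 (sch.share x r)) = x.1) ∧
  (∃ φ2 : B × A → X2, ∀ x ∈ S, ∀ r, 0 < sch.pR r → φ2 (view2 (sch.share x r)) = x.2.1) ∧
  (∃ φ3 : C × B → X3, ∀ x ∈ S, ∀ r, 0 < sch.pR r → φ3 (view3 (sch.share x r)) = x.2.2) ∧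
  (∀ x ∈ S, ∀ x' ∈ S, x.1 = x'.1 → ∀ v, probV1 sch x v = probV1 sch x' v) ∧
  (∀ x ∈ S, ∀ x' ∈ S, x.2.1 = x'.2.1 → ∀ v, probV2 sch x v = probV2 sch x' v) ∧
  (∀ x ∈ S, ∀ x' ∈ S, x.2.2 = x'.2.2 → ∀ v, probV3 sch x v = probV3 sch x' v)

/-- The randomness complexity `ρ(S)`: the infimum of `log₂ |R|` over all
3SS schemes for domain `S`. -/
noncomputable def rho {X1 X2 X3 : Type} (S : Set (X1 × X2 × X3)) : ℝ :=
  sInf { t : ℝ | ∃ (n : ℕ) (A B C : Type) (sch : Scheme (X1 × X2 × X3) A B C (Fin n)),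
    Is3SS S sch ∧ t = Real.logb 2 n }

/-- Probability that the share triple equals `w`, given the secret `x`. -/
noncomputable def probW {X A B C R : Type} [Fintype R] (sch : Scheme X A B C R)
    (x : X) (w : A × B × C) : ℝ :=
  ∑ r, if sch.share x r = w then sch.pR r else 0

/-- `M_x`: the set of share triples occurring with positive probability on input `x`. -/
def Msupp {X A B C R : Type} [Fintype R] (sch : Scheme X A B C R) (x : X) :
    Set (A × B × C) :=
  {w | 0 < probW sch x w}

/-- The domain `S = {000, 001, 010, 111}` (family 13). -/
def S5 : Set (Bool × Bool × Bool) :=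
  {(false, false, false), (false, false, true), (false, true, false), (true, true, true)}

/- ===== Auxiliary lemmas ===== -/

section Aux

lemma sum_ite_pos_iff {R : Type} [Fintype R] (p : R → ℝ) (hnn : ∀ r, 0 ≤ p r)
    (P : R → Prop) [DecidablePred P] :
    0 < (∑ r, if P r then p r else 0) ↔ ∃ r, 0 < p r ∧ P r := by
  constructor
  · intro h
    by_contra hc
    push_neg at hc
    have hz : ∀ r ∈ Finset.univ, (if P r then p r else 0) = (0:ℝ) := by
      intro r _
      by_cases hP : P r
      · rw [if_pos hP]
        have h1 : ¬ 0 < p r := fun hpr => hc r hpr hP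
        linarith [hnn r]
      · rw [if_neg hP]
    rw [Finset.sum_eq_zero hz] at h
    exact lt_irrefl 0 h
  · rintro ⟨r, hr, hP⟩
    have hnn' : ∀ i ∈ Finset.univ, (0:ℝ) ≤ if P i then p i else 0 := by
      intro i _
      by_cases h : P i
      · rw [if_pos h]; exact hnn i
      · rw [if_neg h]
    have hle : (if P r then p r else 0) ≤ ∑ r, if P r then p r else 0 :=
      Finset.single_le_sum hnn' (Finset.mem_univ r)
    rw [if_pos hP] at hle
    linarith

variable {X A B C R : Type} [Fintype R] (sch : Scheme X A B C R)

lemma mem_Msupp_iff (x : X) (w : A × B × C) :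
    w ∈ Msupp sch x ↔ ∃ r, 0 < sch.pR r ∧ sch.share x r = w := by
  have : w ∈ Msupp sch x ↔ 0 < probW sch x w := Iff.rfl
  rw [this, probW]
  exact sum_ite_pos_iff _ sch.nonneg _

lemma probV1_pos_iff (x : X) (v : A × C) :
    0 < probV1 sch x v ↔ ∃ r, 0 < sch.pR r ∧ view1 (sch.share x r) = v := by
  rw [probV1]; exact sum_ite_pos_iff _ sch.nonneg _

lemma probV2_pos_iff (x : X) (v : B × A) :
    0 < probV2 sch x v ↔ ∃ r, 0 < sch.pR r ∧ view2 (sch.share x r) = v := by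
  rw [probV2]; exact sum_ite_pos_iff _ sch.nonneg _

lemma probV3_pos_iff (x : X) (v : C × B) :
    0 < probV3 sch x v ↔ ∃ r, 0 < sch.pR r ∧ view3 (sch.share x r) = v := by
  rw [probV3]; exact sum_ite_pos_iff _ sch.nonneg _

lemma exists_pos_pR : ∃ r, 0 < sch.pR r := by
  by_contra h
  push_neg at h
  have hz : ∀ r ∈ Finset.univ, sch.pR r = 0 :=
    fun r _ => le_antisymm (h r) (sch.nonneg r)
  have := sch.sum_one
  rw [Finset.sum_eq_zero hz] at this
  norm_num at this

lemma Msupp_nonempty (x : X) : (Msupp sch x).Nonempty := by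
  obtain ⟨r, hr⟩ := exists_pos_pR sch
  exact ⟨sch.share x r, (mem_Msupp_iff sch x _).2 ⟨r, hr, rfl⟩⟩

lemma Msupp_finite (x : X) : (Msupp sch x).Finite := by
  apply (Set.finite_range (sch.share x)).subset
  rintro w hw
  obtain ⟨r, _, hr⟩ := (mem_Msupp_iff sch x w).1 hw
  exact ⟨r, hr⟩

end Aux

/- ===== Bipartite counting lemma ===== -/

lemma bipartite_six {α γ : Type*} (E : Set (α × γ)) (hfin : E.Finite)
    (hrow : ∀ p ∈ E, ∃ c, c ≠ p.2 ∧ (p.1, c) ∈ E)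
    (hcol : ∀ p ∈ E, ∃ a, a ≠ p.1 ∧ (a, p.2) ∈ E)
    (a₀ : α) (c₀ : γ) (ha : ∃ c, (a₀, c) ∈ E) (hc : ∃ a, (a, c₀) ∈ E)
    (hhole : (a₀, c₀) ∉ E) :
    6 ≤ E.ncard := by
  classical
  set F := hfin.toFinset with hF
  have hmemF : ∀ p, p ∈ F ↔ p ∈ E := fun p => hfin.mem_toFinset
  set AF := F.image Prod.fst with hAF
  set CF := F.image Prod.snd with hCF
  have hAcard : 2 * AF.card ≤ F.card := by
    have h1 : F.card = ∑ a ∈ AF, (F.filter fun p => p.1 = a).card :=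
      Finset.card_eq_sum_card_fiberwise (fun p hp => Finset.mem_image_of_mem _ hp)
    have h2 : ∀ a ∈ AF, 2 ≤ (F.filter fun p => p.1 = a).card := by
      intro a haf
      obtain ⟨p, hp, hpa⟩ := Finset.mem_image.1 haf
      obtain ⟨c, hcne, hcE⟩ := hrow p ((hmemF p).1 hp)
      have hp1 : p ∈ F.filter fun q => q.1 = a := Finset.mem_filter.2 ⟨hp, hpa⟩
      have hp2 : (p.1, c) ∈ F.filter fun q => q.1 = a :=
        Finset.mem_filter.2 ⟨(hmemF _).2 hcE, hpa⟩
      have hne : p ≠ (p.1, c) := by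
        intro h
        exact hcne (congrArg Prod.snd h).symm
      exact Finset.one_lt_card.2 ⟨p, hp1, (p.1, c), hp2, hne⟩
    calc 2 * AF.card = ∑ _a ∈ AF, 2 := by
          rw [Finset.sum_const, smul_eq_mul, mul_comm]
      _ ≤ ∑ a ∈ AF, (F.filter fun p => p.1 = a).card := Finset.sum_le_sum h2
      _ = F.card := h1.symm
  have hCcard : 2 * CF.card ≤ F.card := by
    have h1 : F.card = ∑ c ∈ CF, (F.filter fun p => p.2 = c).card :=
      Finset.card_eq_sum_card_fiberwise (fun p hp => Finset.mem_image_of_mem _ hp)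
    have h2 : ∀ c ∈ CF, 2 ≤ (F.filter fun p => p.2 = c).card := by
      intro c hcf
      obtain ⟨p, hp, hpc⟩ := Finset.mem_image.1 hcf
      obtain ⟨a, hane, haE⟩ := hcol p ((hmemF p).1 hp)
      have hp1 : p ∈ F.filter fun q => q.2 = c := Finset.mem_filter.2 ⟨hp, hpc⟩
      have hp2 : (a, p.2) ∈ F.filter fun q => q.2 = c :=
        Finset.mem_filter.2 ⟨(hmemF _).2 haE, hpc⟩
      have hne : p ≠ (a, p.2) := by
        intro h
        exact hane (congrArg Prod.fst h).symm
      exact Finset.one_lt_card.2 ⟨p, hp1, (a, p.2), hp2, hne⟩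
    calc 2 * CF.card = ∑ _c ∈ CF, 2 := by
          rw [Finset.sum_const, smul_eq_mul, mul_comm]
      _ ≤ ∑ c ∈ CF, (F.filter fun p => p.2 = c).card := Finset.sum_le_sum h2
      _ = F.card := h1.symm
  obtain ⟨ca, hca⟩ := ha
  obtain ⟨ac, hac⟩ := hc
  have ha₀ : a₀ ∈ AF := Finset.mem_image.2 ⟨(a₀, ca), (hmemF _).2 hca, rfl⟩
  have hc₀ : c₀ ∈ CF := Finset.mem_image.2 ⟨(ac, c₀), (hmemF _).2 hac, rfl⟩
  have hsub : F ⊆ (AF ×ˢ CF).erase (a₀, c₀) := by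
    intro p hp
    refine Finset.mem_erase.2 ⟨?_, Finset.mem_product.2
      ⟨Finset.mem_image_of_mem _ hp, Finset.mem_image_of_mem _ hp⟩⟩
    intro hpe
    rw [hpe] at hp
    exact hhole ((hmemF _).1 hp)
  have hcard : F.card ≤ AF.card * CF.card - 1 := by
    have h := Finset.card_le_card hsub
    rwa [Finset.card_erase_of_mem (Finset.mem_product.2 ⟨ha₀, hc₀⟩),
      Finset.card_product] at h
  have hpos : 1 ≤ AF.card * CF.card :=
    Nat.one_le_iff_ne_zero.2 (Nat.mul_ne_zero
      (Finset.card_pos.2 ⟨a₀, ha₀⟩).ne' (Finset.card_pos.2 ⟨c₀, hc₀⟩).ne')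
  have hA3 : 3 ≤ AF.card := by
    by_contra hcon
    push_neg at hcon
    have h2 : AF.card ≤ 2 := by omega
    have : AF.card * CF.card ≤ 2 * CF.card := Nat.mul_le_mul_right _ h2
    omega
  have h6 : 6 ≤ F.card := by omega
  rwa [Set.ncard_eq_toFinset_card E hfin]

/- ===== Part 1: the combinatorial lower bound ===== -/

theorem six_le_Msupp {A B C R : Type} [Fintype R]
    (sch : Scheme (Bool × Bool × Bool) A B C R) (h : Is3SS S5 sch) :
    6 ≤ (Msupp sch (false, false, true)).ncard := by
  obtain ⟨⟨φ1, hφ1⟩, ⟨φ2, hφ2⟩, ⟨φ3, hφ3⟩, hp1, hp2, hp3⟩ := h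
  have h000 : ((false, false, false) : Bool × Bool × Bool) ∈ S5 := by simp [S5]
  have h001 : ((false, false, true) : Bool × Bool × Bool) ∈ S5 := by simp [S5]
  have h010 : ((false, true, false) : Bool × Bool × Bool) ∈ S5 := by simp [S5]
  have h111 : ((true, true, true) : Bool × Bool × Bool) ∈ S5 := by simp [S5]
  -- reconstruction on supports
  have hr1 : ∀ x ∈ S5, ∀ w ∈ Msupp sch x, φ1 (view1 w) = x.1 := by
    intro x hx w hw
    obtain ⟨r, hr, hsh⟩ := (mem_Msupp_iff sch x w).1 hw
    rw [← hsh]; exact hφ1 x hx r hr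
  have hr2 : ∀ x ∈ S5, ∀ w ∈ Msupp sch x, φ2 (view2 w) = x.2.1 := by
    intro x hx w hw
    obtain ⟨r, hr, hsh⟩ := (mem_Msupp_iff sch x w).1 hw
    rw [← hsh]; exact hφ2 x hx r hr
  have hr3 : ∀ x ∈ S5, ∀ w ∈ Msupp sch x, φ3 (view3 w) = x.2.2 := by
    intro x hx w hw
    obtain ⟨r, hr, hsh⟩ := (mem_Msupp_iff sch x w).1 hw
    rw [← hsh]; exact hφ3 x hx r hr
  -- support transfer via privacy
  have t1 : ∀ x ∈ S5, ∀ x' ∈ S5, x.1 = x'.1 → ∀ w ∈ Msupp sch x,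
      ∃ w' ∈ Msupp sch x', view1 w' = view1 w := by
    intro x hx x' hx' hxx w hw
    obtain ⟨r, hr, hsh⟩ := (mem_Msupp_iff sch x w).1 hw
    have hpos : 0 < probV1 sch x (view1 w) :=
      (probV1_pos_iff sch x _).2 ⟨r, hr, by rw [hsh]⟩
    rw [hp1 x hx x' hx' hxx (view1 w)] at hpos
    obtain ⟨r', hr', hv⟩ := (probV1_pos_iff sch x' _).1 hpos
    exact ⟨sch.share x' r', (mem_Msupp_iff sch x' _).2 ⟨r', hr', rfl⟩, hv⟩
  have t2 : ∀ x ∈ S5, ∀ x' ∈ S5, x.2.1 = x'.2.1 → ∀ w ∈ Msupp sch x,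
      ∃ w' ∈ Msupp sch x', view2 w' = view2 w := by
    intro x hx x' hx' hxx w hw
    obtain ⟨r, hr, hsh⟩ := (mem_Msupp_iff sch x w).1 hw
    have hpos : 0 < probV2 sch x (view2 w) :=
      (probV2_pos_iff sch x _).2 ⟨r, hr, by rw [hsh]⟩
    rw [hp2 x hx x' hx' hxx (view2 w)] at hpos
    obtain ⟨r', hr', hv⟩ := (probV2_pos_iff sch x' _).1 hpos
    exact ⟨sch.share x' r', (mem_Msupp_iff sch x' _).2 ⟨r', hr', rfl⟩, hv⟩
  have t3 : ∀ x ∈ S5, ∀ x' ∈ S5, x.2.2 = x'.2.2 → ∀ w ∈ Msupp sch x,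
      ∃ w' ∈ Msupp sch x', view3 w' = view3 w := by
    intro x hx x' hx' hxx w hw
    obtain ⟨r, hr, hsh⟩ := (mem_Msupp_iff sch x w).1 hw
    have hpos : 0 < probV3 sch x (view3 w) :=
      (probV3_pos_iff sch x _).2 ⟨r, hr, by rw [hsh]⟩
    rw [hp3 x hx x' hx' hxx (view3 w)] at hpos
    obtain ⟨r', hr', hv⟩ := (probV3_pos_iff sch x' _).1 hpos
    exact ⟨sch.share x' r', (mem_Msupp_iff sch x' _).2 ⟨r', hr', rfl⟩, hv⟩
  set M1 := Msupp sch (false, false, true) with hM1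
  set E : Set (A × C) := view1 '' M1 with hE
  -- row property
  have hrow : ∀ p ∈ E, ∃ c, c ≠ p.2 ∧ (p.1, c) ∈ E := by
    rintro ⟨pa, pc⟩ ⟨w, hw, hvw⟩
    obtain ⟨w0, hw0, hv0⟩ := t1 _ h001 _ h000 rfl w hw
    obtain ⟨w1, hw1, hv1⟩ := t2 _ h000 _ h001 rfl w0 hw0
    rw [hvw] at hv0
    have h0a : w0.1 = pa := congrArg (Prod.fst : A × C → A) hv0
    have h0c : w0.2.2 = pc := congrArg (Prod.snd : A × C → C) hv0
    have h1b : w1.2.1 = w0.2.1 := congrArg (Prod.fst : B × A → B) hv1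
    have h1a : w1.1 = w0.1 := congrArg (Prod.snd : B × A → A) hv1
    refine ⟨w1.2.2, ?_, w1, hw1, ?_⟩
    · intro hcc
      have hcc' : w1.2.2 = pc := hcc
      have e0 : φ3 (view3 w0) = false := hr3 _ h000 w0 hw0
      have e1 : φ3 (view3 w1) = true := hr3 _ h001 w1 hw1
      have hv : view3 w1 = view3 w0 := by
        show (w1.2.2, w1.2.1) = (w0.2.2, w0.2.1)
        rw [h1b, hcc', h0c]
      rw [hv, e0] at e1
      simp at e1
    · show (w1.1, w1.2.2) = (pa, w1.2.2)
      rw [h1a, h0a]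
  -- column property
  have hcol : ∀ p ∈ E, ∃ a, a ≠ p.1 ∧ (a, p.2) ∈ E := by
    rintro ⟨pa, pc⟩ ⟨w, hw, hvw⟩
    obtain ⟨w0, hw0, hv0⟩ := t1 _ h001 _ h000 rfl w hw
    obtain ⟨w2, hw2, hv2⟩ := t3 _ h000 _ h010 rfl w0 hw0
    rw [hvw] at hv0
    have h0a : w0.1 = pa := congrArg (Prod.fst : A × C → A) hv0
    have h0c : w0.2.2 = pc := congrArg (Prod.snd : A × C → C) hv0
    have h2c : w2.2.2 = w0.2.2 := congrArg (Prod.fst : C × B → C) hv2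
    have h2b : w2.2.1 = w0.2.1 := congrArg (Prod.snd : C × B → B) hv2
    obtain ⟨w1', hw1', hv1'⟩ := t1 _ h010 _ h001 rfl w2 hw2
    refine ⟨w2.1, ?_, w1', hw1', ?_⟩
    · intro haa
      have haa' : w2.1 = pa := haa
      have e0 : φ2 (view2 w0) = false := hr2 _ h000 w0 hw0
      have e2 : φ2 (view2 w2) = true := hr2 _ h010 w2 hw2
      have hv : view2 w2 = view2 w0 := by
        show (w2.2.1, w2.1) = (w0.2.1, w0.1)
        rw [h2b, haa', h0a]
      rw [hv, e0] at e2
      simp at e2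
    · rw [hv1']
      show (w2.1, w2.2.2) = (w2.1, pc)
      rw [h2c, h0c]
  -- the hole
  obtain ⟨w, hw⟩ := Msupp_nonempty sch ((false, false, true) : Bool × Bool × Bool)
  obtain ⟨w3, hw3, hv3⟩ := t3 _ h001 _ h111 rfl w hw
  obtain ⟨w4, hw4, hv4⟩ := t2 _ h111 _ h010 rfl w3 hw3
  have h3c : w3.2.2 = w.2.2 := congrArg (Prod.fst : C × B → C) hv3
  have h4a : w4.1 = w3.1 := congrArg (Prod.snd : B × A → A) hv4
  have haex : ∃ c, (w3.1, c) ∈ E := by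
    obtain ⟨w5, hw5, hv5⟩ := t1 _ h010 _ h001 rfl w4 hw4
    refine ⟨w4.2.2, w5, hw5, ?_⟩
    rw [hv5]
    show (w4.1, w4.2.2) = (w3.1, w4.2.2)
    rw [h4a]
  have hcex : ∃ a, (a, w.2.2) ∈ E := ⟨w.1, w, hw, rfl⟩
  have hhole : (w3.1, w.2.2) ∉ E := by
    rintro ⟨w6, hw6, hv6⟩
    have e6 : φ1 (view1 w6) = false := hr1 _ h001 w6 hw6
    have e3 : φ1 (view1 w3) = true := hr1 _ h111 w3 hw3
    have hv : view1 w6 = view1 w3 := by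
      rw [hv6]
      show (w3.1, w.2.2) = (w3.1, w3.2.2)
      rw [h3c]
    rw [hv, e3] at e6
    simp at e6
  have hEfin : E.Finite := (Msupp_finite sch _).image _
  have h6 : 6 ≤ E.ncard :=
    bipartite_six E hEfin hrow hcol w3.1 w.2.2 haex hcex hhole
  calc 6 ≤ E.ncard := h6
    _ ≤ M1.ncard := Set.ncard_image_le (Msupp_finite sch _)

/- ===== Part 2: an explicit scheme ===== -/

def shareFn (x : Bool × Bool × Bool) (r : Fin 8) :
    (Bool × Bool) × (Bool × Bool) × (Bool × Bool) :=
  let r1 := decide (r.val % 2 = 1)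
  let r2 := decide (r.val / 2 % 2 = 1)
  let r3 := decide (r.val / 4 % 2 = 1)
  ((r1, xor x.2.1 r2), (r2, xor x.2.2 r3), (r3, xor x.1 r1))

noncomputable def mySch :
    Scheme (Bool × Bool × Bool) (Bool × Bool) (Bool × Bool) (Bool × Bool) (Fin 8) where
  pR _ := 1/8
  nonneg _ := by norm_num
  sum_one := by simp
  share := shareFn

lemma sum_ite_const {R : Type} [Fintype R] (P : R → Prop) [DecidablePred P] (c : ℝ) :
    (∑ r, if P r then c else 0) = ((Finset.univ.filter P).card : ℝ) * c := by
  rw [← Finset.sum_filter, Finset.sum_const, nsmul_eq_mul]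

lemma card1 : ∀ (x x' : Bool × Bool × Bool) (v : (Bool × Bool) × (Bool × Bool)),
    x.1 = x'.1 →
    (Finset.univ.filter fun r => view1 (shareFn x r) = v).card
    = (Finset.univ.filter fun r => view1 (shareFn x' r) = v).card := by decide

lemma card2 : ∀ (x x' : Bool × Bool × Bool) (v : (Bool × Bool) × (Bool × Bool)),
    x.2.1 = x'.2.1 →
    (Finset.univ.filter fun r => view2 (shareFn x r) = v).card
    = (Finset.univ.filter fun r => view2 (shareFn x' r) = v).card := by decide

lemma card3 : ∀ (x x' : Bool × Bool × Bool) (v : (Bool × Bool) × (Bool × Bool)),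
    x.2.2 = x'.2.2 →
    (Finset.univ.filter fun r => view3 (shareFn x r) = v).card
    = (Finset.univ.filter fun r => view3 (shareFn x' r) = v).card := by decide

lemma correct1 : ∀ (x : Bool × Bool × Bool) (r : Fin 8),
    xor (shareFn x r).2.2.2 (shareFn x r).1.1 = x.1 := by decide

lemma correct2 : ∀ (x : Bool × Bool × Bool) (r : Fin 8),
    xor (shareFn x r).1.2 (shareFn x r).2.1.1 = x.2.1 := by decide

lemma correct3 : ∀ (x : Bool × Bool × Bool) (r : Fin 8),
    xor (shareFn x r).2.1.2 (shareFn x r).2.2.1 = x.2.2 := by decide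

lemma mySch_Is3SS : Is3SS S5 mySch := by
  refine ⟨⟨fun v => xor v.2.2 v.1.1, ?_⟩, ⟨fun v => xor v.2.2 v.1.1, ?_⟩,
    ⟨fun v => xor v.2.2 v.1.1, ?_⟩, ?_, ?_, ?_⟩
  · intro x _ r _
    exact correct1 x r
  · intro x _ r _
    exact correct2 x r
  · intro x _ r _
    exact correct3 x r
  · intro x _ x' _ h v
    rw [probV1, probV1]
    simp only [mySch]
    erw [sum_ite_const, sum_ite_const]
    norm_num
    have := card1 x x' v h
    convert this using 3 <;> exact Finset.filter_congr_decidable _ _ _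
  · intro x _ x' _ h v
    rw [probV2, probV2]
    simp only [mySch]
    erw [sum_ite_const, sum_ite_const]
    norm_num
    have := card2 x x' v h
    convert this using 3 <;> exact Finset.filter_congr_decidable _ _ _
  · intro x _ x' _ h v
    rw [probV3, probV3]
    simp only [mySch]
    erw [sum_ite_const, sum_ite_const]
    norm_num
    have := card3 x x' v h
    convert this using 3 <;> exact Finset.filter_congr_decidable _ _ _

/-- Any 3SS scheme for `S = {000, 001, 010, 111}` has `|M_{001}| ≥ 6`;
consequently `ρ(S) ≥ log₂ 6`. -/
theorem family13_lower_bound :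
    (∀ {A B C R : Type} [Fintype R] (sch : Scheme (Bool × Bool × Bool) A B C R),
      Is3SS S5 sch → 6 ≤ (Msupp sch (false, false, true)).ncard) ∧
    Real.logb 2 6 ≤ rho S5 := by
  constructor
  · intro A B C R _ sch h
    exact six_le_Msupp sch h
  · rw [rho]
    apply le_csInf
    · exact ⟨Real.logb 2 8, 8, _, _, _, mySch, mySch_Is3SS, by norm_num⟩
    · rintro t ⟨n, A, B, C, sch, h3, rfl⟩
      have h6 := six_le_Msupp sch h3
      have hsub : Msupp sch (false, false, true) ⊆
          Set.range (sch.share (false, false, true)) := by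
        rintro w hw
        obtain ⟨r, _, hr⟩ := (mem_Msupp_iff sch _ w).1 hw
        exact ⟨r, hr⟩
      have hle : (Msupp sch (false, false, true)).ncard ≤ n := by
        calc (Msupp sch (false, false, true)).ncard
            ≤ (Set.range (sch.share (false, false, true))).ncard :=
              Set.ncard_le_ncard hsub (Set.finite_range _)
          _ = ((sch.share (false, false, true)) '' Set.univ).ncard := by
              rw [Set.image_univ]
          _ ≤ (Set.univ : Set (Fin n)).ncard := Set.ncard_image_le Set.finite_univ
          _ = n := by rw [Set.ncard_univ, Nat.card_eq_fintype_card, Fintype.card_fin]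
      have h6n : (6 : ℝ) ≤ (n : ℝ) := by exact_mod_cast le_trans h6 hle
      have hn : (0:ℝ) < (n:ℝ) := by linarith
      exact (Real.logb_le_logb (by norm_num) (by norm_num) hn).2 h6n
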